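/- Let 𝓗 be a finite nonempty family of finite simple graphs with γ_𝓗 ≥ 1, and let n ≥ γ_𝓗 be an integer. Then the generalized book B_{γ_𝓗, n−γ_𝓗} is 𝓗-subdivision-free. -/

import Mathlib

open Matrix

namespace SubdivPaper

/-- A vertex set is independent in `G`. -/
def IsIndep {V : Type*} (G : SimpleGraph V) (s : Set V) : Prop :=
  s.Pairwise fun u v => ¬ G.Adj u v

/-- The independence number `α(G)` of a finite graph `G`. -/
noncomputable def indepNum {V : Type*} [Fintype V] (G : SimpleGraph V) : ℕ :=
  sSup {k : ℕ | ∃ s : Finset V, IsIndep G ↑s ∧ s.card = k}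

/-- `γ_H := |V(H)| - α(H) - 1`. -/
noncomputable def gammaOf {V : Type*} [Fintype V] (G : SimpleGraph V) : ℕ :=
  Fintype.card V - indepNum G - 1

/-- The set of internal vertices of a walk (support minus the two endpoints). -/
def WalkInternal {V : Type*} {G : SimpleGraph V} {a b : V} (p : G.Walk a b) : Set V :=
  {w | w ∈ p.support ∧ w ≠ a ∧ w ≠ b}

/-- `G` contains a subdivision of `H`: there are an injective map `φ` on vertices and,
for each edge `uv` of `H`, a path in `G` joining `φ u` and `φ v`, such that these paths are
pairwise internally vertex-disjoint and no internal vertex lies in the image of `φ`. -/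
def ContainsSubdiv {V W : Type*} (G : SimpleGraph V) (H : SimpleGraph W) : Prop :=
  ∃ φ : W → V, Function.Injective φ ∧
    ∃ P : ∀ ⦃u v : W⦄, H.Adj u v → G.Walk (φ u) (φ v),
      (∀ ⦃u v : W⦄ (h : H.Adj u v), (P h).IsPath) ∧
      (∀ ⦃u v : W⦄ (h : H.Adj u v), P h.symm = (P h).reverse) ∧
      (∀ ⦃u v : W⦄ (h : H.Adj u v), ∀ w ∈ WalkInternal (P h), w ∉ Set.range φ) ∧
      (∀ ⦃u v u' v' : W⦄ (h : H.Adj u v) (h' : H.Adj u' v'),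
        s(u, v) ≠ s(u', v') → WalkInternal (P h) ∩ WalkInternal (P h') = ∅)

variable {ι : Type*}

/-- `G` is `𝓗`-subdivision-free. -/
def SubdivFreeFam (m : ι → ℕ) (ℋ : ∀ i, SimpleGraph (Fin (m i)))
    {V : Type*} (G : SimpleGraph V) : Prop :=
  ∀ i, ¬ ContainsSubdiv G (ℋ i)

/-- `γ_𝓗 := min_{H ∈ 𝓗} γ_H`. -/
noncomputable def gammaFam (m : ι → ℕ) (ℋ : ∀ i, SimpleGraph (Fin (m i))) : ℕ :=
  sInf {g : ℕ | ∃ i, gammaOf (ℋ i) = g}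

open Classical in
/-- The real adjacency matrix of a graph on `Fin n`. -/
noncomputable def adjMat {n : ℕ} (G : SimpleGraph (Fin n)) : Matrix (Fin n) (Fin n) ℝ :=
  Matrix.of fun u v => if G.Adj u v then (1 : ℝ) else 0

/-- The spectral radius: the largest eigenvalue of the adjacency matrix. -/
noncomputable def specRad {n : ℕ} (G : SimpleGraph (Fin n)) : ℝ :=
  sSup {t : ℝ | ∃ x : Fin n → ℝ, x ≠ 0 ∧ adjMat G *ᵥ x = t • x}

/-- `spex(n, 𝓗_sub)`. -/
noncomputable def spex (n : ℕ) (m : ι → ℕ) (ℋ : ∀ i, SimpleGraph (Fin (m i))) : ℝ :=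
  sSup {ρ : ℝ | ∃ G : SimpleGraph (Fin n), SubdivFreeFam m ℋ G ∧ specRad G = ρ}

/-- `SPEX(n, 𝓗_sub)`: the `n`-vertex `𝓗`-subdivision-free graphs of maximum spectral radius. -/
def SPEX (n : ℕ) (m : ι → ℕ) (ℋ : ∀ i, SimpleGraph (Fin (m i))) :
    Set (SimpleGraph (Fin n)) :=
  {G | SubdivFreeFam m ℋ G ∧
    ∀ G' : SimpleGraph (Fin n), SubdivFreeFam m ℋ G' → specRad G' ≤ specRad G}

/-- The generalized book `B_{s,t} = K_s ∨ (t K_1)`. -/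
def book (s t : ℕ) : SimpleGraph (Fin (s + t)) :=
  SimpleGraph.fromRel fun u v => (u : ℕ) < s ∨ (v : ℕ) < s

/-- `G` contains a spanning subgraph isomorphic to `B`. -/
def HasSpanningSubgraphIso {V W : Type*} (G : SimpleGraph V) (B : SimpleGraph W) : Prop :=
  ∃ f : W ≃ V, ∀ u v : W, B.Adj u v → G.Adj (f u) (f v)

/-- The graph obtained from `G` by adding the edge `uv`. -/
def addEdge {V : Type*} (G : SimpleGraph V) (u v : V) : SimpleGraph V :=
  G ⊔ SimpleGraph.fromEdgeSet {s(u, v)}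

/-- `G` is `𝓗`-subdivision-saturated. -/
def SubdivSatFam (m : ι → ℕ) (ℋ : ∀ i, SimpleGraph (Fin (m i)))
    {V : Type*} (G : SimpleGraph V) : Prop :=
  SubdivFreeFam m ℋ G ∧
    ∀ u v : V, u ≠ v → ¬ G.Adj u v → ∃ i, ContainsSubdiv (addEdge G u v) (ℋ i)

/-- `max_{H ∈ 𝓗} |V(H)|`. -/
noncomputable def maxOrderFam (m : ι → ℕ) : ℕ := sSup (Set.range m)

/-- The minimum order of a graph `H ∈ 𝓗` with `γ_H = γ_𝓗` (the order of a minimal graph). -/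
noncomputable def minOrderAtGamma (m : ι → ℕ) (ℋ : ∀ i, SimpleGraph (Fin (m i))) : ℕ :=
  sInf {k : ℕ | ∃ i, gammaOf (ℋ i) = gammaFam m ℋ ∧ m i = k}

/-- `α_𝓗`: the independence number of a minimal graph with respect to `𝓗`. -/
noncomputable def alphaFam (m : ι → ℕ) (ℋ : ∀ i, SimpleGraph (Fin (m i))) : ℕ :=
  minOrderAtGamma m ℋ - gammaFam m ℋ - 1

/-- `S'' = {v ∉ L : L ⊆ N_G(v)}`. -/
def Sdd {n : ℕ} (G : SimpleGraph (Fin n)) (L : Finset (Fin n)) : Set (Fin n) :=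
  {v | v ∉ L ∧ ∀ w ∈ L, G.Adj w v}

/-- `S' = (V ∖ L) ∖ S''`. -/
def Sd {n : ℕ} (G : SimpleGraph (Fin n)) (L : Finset (Fin n)) : Set (Fin n) :=
  {v | v ∉ L ∧ ¬ ∀ w ∈ L, G.Adj w v}

/-- `L^λ = {u : x_u ≥ (10 C)^{-λ} x_{u*}}`. -/
def Lset {n : ℕ} (x : Fin n → ℝ) (u₀ : Fin n) (C : ℝ) (lam : ℕ) : Set (Fin n) :=
  {u | ((10 * C) ^ lam)⁻¹ * x u₀ ≤ x u}

/-- `N_i(u)`: vertices at distance exactly `i` from `u`. -/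
def Nset {n : ℕ} (G : SimpleGraph (Fin n)) (u : Fin n) (i : ℕ) : Set (Fin n) :=
  {v | G.dist u v = i}

/-- `H[S] ∈ Γ_s(H)` is irreducible: `|S| = s` and no `s`-vertex induced subgraph of `H` is
isomorphic to a proper subgraph of `H[S]`. -/
def IrreducibleInduced {h : ℕ} (H : SimpleGraph (Fin h)) (s : ℕ) (S : Finset (Fin h)) : Prop :=
  S.card = s ∧
    ¬ ∃ (T : Finset (Fin h)) (B' : SimpleGraph ((S : Set (Fin h)))),
        T.card = s ∧ B' ≤ SimpleGraph.induce (S : Set (Fin h)) H ∧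
        B' ≠ SimpleGraph.induce (S : Set (Fin h)) H ∧
        Nonempty (SimpleGraph.induce (T : Set (Fin h)) H ≃g B')

/-- `Q` is `Γ(𝓗)`-subdivision-free. -/
def GammaFree (m : ι → ℕ) (ℋ : ∀ i, SimpleGraph (Fin (m i)))
    {X : Type*} (Q : SimpleGraph X) : Prop :=
  ∀ (i : ι) (S : Finset (Fin (m i))),
    IrreducibleInduced (ℋ i) (m i - gammaFam m ℋ) S →
    ¬ ContainsSubdiv Q (SimpleGraph.induce (S : Set (Fin (m i))) (ℋ i))

/-- `Q` is `Γ(𝓗)`-subdivision-saturated. -/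
def GammaSat (m : ι → ℕ) (ℋ : ∀ i, SimpleGraph (Fin (m i)))
    {X : Type*} (Q : SimpleGraph X) : Prop :=
  GammaFree m ℋ Q ∧
    ∀ u v : X, u ≠ v → ¬ Q.Adj u v →
      ∃ (i : ι) (S : Finset (Fin (m i))),
        IrreducibleInduced (ℋ i) (m i - gammaFam m ℋ) S ∧
        ContainsSubdiv (addEdge Q u v) (SimpleGraph.induce (S : Set (Fin (m i))) (ℋ i))

/-- `G` is `{H}`-subdivision-saturated (single forbidden graph). -/
def SubdivSatSingle {W V : Type*} (H : SimpleGraph W) (G : SimpleGraph V) : Prop :=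
  ¬ ContainsSubdiv G H ∧
    ∀ u v : V, u ≠ v → ¬ G.Adj u v → ContainsSubdiv (addEdge G u v) H

/-- In a walk from `a` to `b` with `a ≠ b` and `a` not adjacent to `b`, there is a vertex
adjacent to `a` in the support, different from both ends. -/
lemma exists_second {V : Type*} {G : SimpleGraph V} {a b : V} (p : G.Walk a b)
    (hab : ¬ G.Adj a b) (hne : a ≠ b) :
    ∃ w, G.Adj a w ∧ w ∈ p.support ∧ w ≠ a ∧ w ≠ b := by
  cases p with
  | nil => exact absurd rfl hne
  | cons h q =>
    refine ⟨_, h, ?_, h.ne.symm, ?_⟩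
    · simp
    · rintro rfl; exact hab h

theorem statement3 {ι : Type*} [Fintype ι] [Nonempty ι]
    (m : ι → ℕ) (ℋ : ∀ i, SimpleGraph (Fin (m i)))
    (hγ : 1 ≤ gammaFam m ℋ)
    (n : ℕ) (hn : gammaFam m ℋ ≤ n) :
    SubdivFreeFam m ℋ (book (gammaFam m ℋ) (n - gammaFam m ℋ)) := by
  classical
  set γ := gammaFam m ℋ with hγdef
  set N := γ + (n - γ) with hNdef
  have hγN : γ ≤ N := Nat.le_add_right _ _
  intro i hcon
  obtain ⟨φ, hφ, P, hpath, hsymm, hext, hdisj⟩ := hcon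
  have hbook : ∀ u v : Fin N, (book γ (n - γ)).Adj u v ↔ u ≠ v ∧ ((u : ℕ) < γ ∨ (v : ℕ) < γ) := by
    intro u v
    simp only [book, SimpleGraph.fromRel_adj]
    tauto
  -- the set of edges of H with both endpoints mapped into the independent "page" part
  set E : Finset (Sym2 (Fin (m i))) :=
    (ℋ i).edgeFinset.filter (fun e => ∀ u ∈ e, γ ≤ ((φ u : Fin N) : ℕ)) with hEdef
  have hΩ : ∀ e ∈ E, ∃ w : Fin N, (w : ℕ) < γ ∧ w ∉ Set.range φ ∧
      ∃ (u v : Fin (m i)) (h : (ℋ i).Adj u v), e = s(u, v) ∧ w ∈ WalkInternal (P h) := by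
    intro e he
    induction e with
    | _ u v =>
      rw [hEdef, Finset.mem_filter, SimpleGraph.mem_edgeFinset, SimpleGraph.mem_edgeSet] at he
      obtain ⟨h, hpage⟩ := he
      have hpu : γ ≤ ((φ u : Fin N) : ℕ) := hpage u (by simp)
      have hpv : γ ≤ ((φ v : Fin N) : ℕ) := hpage v (by simp)
      have hne : φ u ≠ φ v := fun hc => h.ne (hφ hc)
      have hnadj : ¬ (book γ (n - γ)).Adj (φ u) (φ v) := by
        rw [hbook]; push_neg; intro _; omega
      obtain ⟨w, haw, hsup, hwa, hwb⟩ := exists_second (P h) hnadj hne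
      have hwint : w ∈ WalkInternal (P h) := ⟨hsup, hwa, hwb⟩
      have hwγ : (w : ℕ) < γ := by
        rw [hbook] at haw
        rcases haw.2 with h1 | h1
        · omega
        · exact h1
      exact ⟨w, hwγ, hext h w hwint, u, v, h, rfl, hwint⟩
  have : Inhabited (Fin N) := ⟨⟨0, by omega⟩⟩
  choose! f hf1 hf2 hf3 using hΩ
  -- f is injective on E
  have hinj : Set.InjOn f ↑E := by
    intro e1 he1 e2 he2 hfe
    by_contra hne12
    obtain ⟨u, v, h, hs1, hm1⟩ := hf3 e1 he1
    obtain ⟨u', v', h', hs2, hm2⟩ := hf3 e2 he2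
    have hsne : s(u, v) ≠ s(u', v') := by rw [← hs1, ← hs2]; exact hne12
    have hd := hdisj h h' hsne
    have hmem : f e1 ∈ WalkInternal (P h) ∩ WalkInternal (P h') :=
      ⟨hm1, by rw [hfe]; exact hm2⟩
    rw [hd] at hmem
    exact hmem
  set T : Finset (Fin N) :=
    Finset.univ.filter (fun w : Fin N => (w : ℕ) < γ ∧ w ∉ Set.range φ) with hTdef
  have hET : E.card ≤ T.card := by
    apply Finset.card_le_card_of_injOn f _ hinj
    intro e he
    rw [hTdef, Finset.mem_coe, Finset.mem_filter]
    exact ⟨Finset.mem_univ _, hf1 e he, hf2 e he⟩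
  set A : Finset (Fin (m i)) :=
    Finset.univ.filter (fun u : Fin (m i) => ((φ u : Fin N) : ℕ) < γ) with hAdef
  set D : Finset (Fin (m i)) :=
    Finset.univ.filter (fun u : Fin (m i) => γ ≤ ((φ u : Fin N) : ℕ)) with hDdef
  have hAD : A.card + D.card = m i := by
    have h1 := Finset.card_filter_add_card_filter_not
      (s := (Finset.univ : Finset (Fin (m i))))
      (p := fun u => ((φ u : Fin N) : ℕ) < γ)
    rw [hAdef, hDdef]
    simp only [not_lt] at h1
    simpa using h1
  set Sp : Finset (Fin N) := Finset.univ.filter (fun w : Fin N => (w : ℕ) < γ) with hSpdef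
  have hSp : Sp.card = γ := by
    have himg : Sp.image Fin.val = Finset.range γ := by
      ext j
      simp only [hSpdef, Finset.mem_image, Finset.mem_filter, Finset.mem_univ, true_and,
        Finset.mem_range]
      constructor
      · rintro ⟨w, hw, rfl⟩; exact hw
      · intro hj; exact ⟨⟨j, lt_of_lt_of_le hj hγN⟩, hj, rfl⟩
    rw [← Finset.card_image_of_injective Sp Fin.val_injective, himg, Finset.card_range]
  have hTA : T.card + A.card ≤ γ := by
    have hcardA : (A.image φ).card = A.card := Finset.card_image_of_injective _ hφ
    have hTSp : T ⊆ Sp := by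
      intro w hw
      rw [hTdef, Finset.mem_filter] at hw
      rw [hSpdef, Finset.mem_filter]
      exact ⟨hw.1, hw.2.1⟩
    have hASp : A.image φ ⊆ Sp := by
      intro w hw
      rw [Finset.mem_image] at hw
      obtain ⟨u, hu, rfl⟩ := hw
      rw [hAdef, Finset.mem_filter] at hu
      rw [hSpdef, Finset.mem_filter]
      exact ⟨Finset.mem_univ _, hu.2⟩
    have hdisjTA : Disjoint T (A.image φ) := by
      rw [Finset.disjoint_left]
      intro w hwT hwI
      rw [hTdef, Finset.mem_filter] at hwT
      rw [Finset.mem_image] at hwI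
      obtain ⟨u, _, rfl⟩ := hwI
      exact hwT.2.2 ⟨u, rfl⟩
    calc T.card + A.card = T.card + (A.image φ).card := by rw [hcardA]
      _ = (T ∪ A.image φ).card := (Finset.card_union_of_disjoint hdisjTA).symm
      _ ≤ Sp.card := Finset.card_le_card (Finset.union_subset hTSp hASp)
      _ = γ := hSp
  set R : Finset (Fin (m i)) := E.image (fun e => e.out.1) with hRdef
  set I : Finset (Fin (m i)) := D \ R with hIdef
  -- I is independent in ℋ i
  have hIndep : IsIndep (ℋ i) ↑I := by
    intro u hu v hv hne hadj
    rw [Finset.mem_coe, hIdef, Finset.mem_sdiff] at hu hv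
    have huD := hu.1; have hvD := hv.1
    rw [hDdef, Finset.mem_filter] at huD hvD
    have heE : s(u, v) ∈ E := by
      rw [hEdef, Finset.mem_filter, SimpleGraph.mem_edgeFinset, SimpleGraph.mem_edgeSet]
      refine ⟨hadj, ?_⟩
      intro w hw
      rw [Sym2.mem_iff] at hw
      rcases hw with rfl | rfl
      · exact huD.2
      · exact hvD.2
    have hout := Sym2.out_fst_mem s(u, v)
    have hR : (s(u, v)).out.1 ∈ R := by
      rw [hRdef]; exact Finset.mem_image_of_mem _ heE
    rw [Sym2.mem_iff] at hout
    rcases hout with heq | heq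
    · exact hu.2 (heq ▸ hR)
    · exact hv.2 (heq ▸ hR)
  have hDIR : D.card ≤ I.card + R.card := Finset.card_le_card_sdiff_add_card
  have hRE : R.card ≤ E.card := Finset.card_image_le
  -- independence number bound
  have hαI : I.card ≤ indepNum (ℋ i) := by
    apply le_csSup
    · refine ⟨m i, ?_⟩
      rintro x ⟨s, _, rfl⟩
      simpa using Finset.card_le_univ s
    · exact ⟨I, hIndep, rfl⟩
  have hγle : γ ≤ gammaOf (ℋ i) := Nat.sInf_le ⟨i, rfl⟩
  rw [gammaOf] at hγle
  simp only [Fintype.card_fin] at hγle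
  omega

end SubdivPaper
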